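/- There exists a constant C (depending on k, Λ, α, and lower bounds on the evanescent decay rates) such that for all h > 0 and all y, z with y₂, z₂ ≥ 0, the evanescent remainder sum satisfies |Σ_{n∈U_α} (1/√(α_n²-k²)) e^{-√(α_n²-k²)(2h + y₂ + z₂)}| ≤ C·(e^{-β_Δ(2h + y₂ + z₂)}/β_Δ + 1/(k(2h + y₂ + z₂))), where β_Δ = min{√(α_n² - k²) : n ∈ U_α}. -/

import Mathlib

theorem stmt7 (k Λ α : ℝ) (hk : 0 < k) (hΛ : 0 < Λ)
    (αn : ℤ → ℝ) (hαn : ∀ n, αn n = α + 2 * Real.pi * n / Λ)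
    (hwood : ∀ n : ℤ, |αn n| ≠ k)
    (βΔ : ℝ) (hβΔ : βΔ = ⨅ n : {n : ℤ // k < |αn n|}, Real.sqrt ((αn n)^2 - k^2))
    (hβΔpos : 0 < βΔ) :
    ∃ C : ℝ, 0 < C ∧ ∀ h : ℝ, 0 < h → ∀ y₂ z₂ : ℝ, 0 ≤ y₂ → 0 ≤ z₂ →
      |∑' n : {n : ℤ // k < |αn n|},
          (1 / Real.sqrt ((αn n)^2 - k^2)) *
            Real.exp (-Real.sqrt ((αn n)^2 - k^2) * (2*h + y₂ + z₂))|
        ≤ C * (Real.exp (-βΔ * (2*h + y₂ + z₂)) / βΔ + 1 / (k * (2*h + y₂ + z₂))) := by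
  have hπ := Real.pi_pos
  -- positivity of α_n² - k² on the index set
  have hpos : ∀ n : {n : ℤ // k < |αn n|}, 0 < (αn n)^2 - k^2 := by
    rintro ⟨n, hn⟩
    have : k^2 < |αn n|^2 := by
      have := pow_lt_pow_left₀ hn hk.le (n := 2) (by norm_num)
      simpa using this
    simpa [sq_abs] using sub_pos.mpr this
  -- the comparison family g
  set g : ℤ → ℝ := fun n => if k < |αn n| then ((αn n)^2 - k^2)⁻¹ else 0 with hg
  have hgnonneg : ∀ n, 0 ≤ g n := by
    intro n
    by_cases hn : k < |αn n|
    · have : 0 < (αn n)^2 - k^2 := hpos ⟨n, hn⟩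
      simp [hg, hn, this.le]
    · simp [hg, hn]
  -- summability of g by comparison with 1/n²
  obtain ⟨N, hN⟩ := exists_int_gt (Λ * (|α| + k) / Real.pi)
  have hNpos : (0:ℝ) < N := lt_of_le_of_lt (by positivity) hN
  have hgsum : Summable g := by
    apply summable_of_isBigO (g := fun n : ℤ => 1 / (n:ℝ)^2)
      (Real.summable_one_div_int_pow.mpr (by norm_num))
    rw [Asymptotics.isBigO_iff]
    refine ⟨(Λ/Real.pi)^2, ?_⟩
    rw [Filter.eventually_cofinite]
    apply Set.Finite.subset (Set.finite_Icc (-N) N)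
    intro n hn
    simp only [Set.mem_setOf_eq, not_le] at hn
    by_contra hnmem
    apply absurd hn
    push_neg
    have hnN : (N:ℝ) ≤ |(n:ℝ)| := by
      simp only [Set.mem_Icc, not_and_or, not_le] at hnmem
      rcases hnmem with h1 | h1
      · have : (n:ℝ) < -N := by exact_mod_cast h1
        rw [abs_of_neg (by linarith)]; linarith
      · have : (N:ℝ) < n := by exact_mod_cast h1
        rw [abs_of_pos (by linarith)]; linarith
    have hnpos : (0:ℝ) < |(n:ℝ)| := lt_of_lt_of_le hNpos hnN
    have hkey : Real.pi / Λ * |(n:ℝ)| + k ≤ |αn n| := by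
      have h1 : Λ * (|α| + k) / Real.pi < |(n:ℝ)| := lt_of_lt_of_le (lt_of_lt_of_le hN hnN) le_rfl
      have h2 : |α| + k < Real.pi / Λ * |(n:ℝ)| := by
        rw [div_lt_iff₀ (by positivity)] at h1
        rw [div_mul_eq_mul_div, lt_div_iff₀ hΛ]
        nlinarith
      have h3 : |αn n| ≥ 2 * Real.pi / Λ * |(n:ℝ)| - |α| := by
        rw [hαn n]
        have habs : |2 * Real.pi * n / Λ| = 2 * Real.pi / Λ * |(n:ℝ)| := by
          rw [abs_div, abs_of_pos hΛ, abs_mul, abs_of_pos (by positivity : (0:ℝ) < 2 * Real.pi)]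
          ring
        calc 2 * Real.pi / Λ * |(n:ℝ)| - |α| = |2 * Real.pi * n / Λ| - |α| := by rw [habs]
          _ ≤ |α + 2 * Real.pi * n / Λ| := by
              have := abs_add_le α (2 * Real.pi * n / Λ)
              have h4 := abs_sub_abs_le_abs_sub (2 * Real.pi * n / Λ) (-α)
              simp only [abs_neg, sub_neg_eq_add] at h4
              calc |2 * Real.pi * n / Λ| - |α| ≤ |2 * Real.pi * n / Λ + α| := h4
                _ = |α + 2 * Real.pi * n / Λ| := by rw [add_comm]
      have h4 : 2 * Real.pi / Λ * |(n:ℝ)| = 2 * (Real.pi / Λ * |(n:ℝ)|) := by ring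
      linarith
    have hsq : (Real.pi / Λ)^2 * (n:ℝ)^2 ≤ (αn n)^2 - k^2 := by
      have h5 : (αn n)^2 = |αn n|^2 := (sq_abs _).symm
      have h6 : (0:ℝ) ≤ Real.pi / Λ * |(n:ℝ)| := by positivity
      nlinarith [hkey, abs_nonneg (αn n), sq_abs (n:ℝ)]
    have hn2 : (0:ℝ) < (n:ℝ)^2 := by nlinarith [hnpos, sq_abs ((n:ℝ))]
    have hposn : 0 < (αn n)^2 - k^2 := lt_of_lt_of_le (by positivity) hsq
    have hlt : k < |αn n| := by
      by_contra hc
      push_neg at hc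
      have : |αn n|^2 ≤ k^2 := pow_le_pow_left₀ (abs_nonneg _) hc 2
      rw [← sq_abs (αn n)] at hposn; linarith
    have hgn : g n = ((αn n)^2 - k^2)⁻¹ := by simp [hg, hlt]
    rw [Real.norm_eq_abs, hgn, abs_of_nonneg (inv_nonneg.mpr hposn.le),
      Real.norm_eq_abs]
    have habs2 : |1 / (n:ℝ)^2| = 1 / (n:ℝ)^2 := abs_of_nonneg (by positivity)
    rw [habs2, inv_le_iff_one_le_mul₀ hposn]
    have hid : (Λ/Real.pi)^2 * (1/(n:ℝ)^2) * ((Real.pi/Λ)^2 * (n:ℝ)^2) = 1 := by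
      field_simp
      exact div_self (abs_pos.mp hnpos)
    have hc : (Λ/Real.pi)^2 * (1/(n:ℝ)^2) * ((Real.pi/Λ)^2 * (n:ℝ)^2)
        ≤ (Λ/Real.pi)^2 * (1/(n:ℝ)^2) * ((αn n)^2 - k^2) :=
      mul_le_mul_of_nonneg_left hsq (by positivity)
    linarith
  -- restrict to subtype
  have hgsub : Summable (fun n : {n : ℤ // k < |αn n|} => ((αn n)^2 - k^2)⁻¹) := by
    have := hgsum.subtype {n : ℤ | k < |αn n|}
    apply this.congr
    rintro ⟨n, hn⟩
    have hn' : k < |αn n| := hn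
    simp [hg, hn']
  set S := ∑' n : {n : ℤ // k < |αn n|}, ((αn n)^2 - k^2)⁻¹ with hS
  have hSnonneg : 0 ≤ S := tsum_nonneg (fun n => inv_nonneg.mpr (hpos n).le)
  refine ⟨S * k + 1, by positivity, ?_⟩
  intro h hh y₂ z₂ hy hz
  set a := 2*h + y₂ + z₂ with ha
  have hapos : 0 < a := by rw [ha]; linarith
  -- pointwise bound
  have hFle : ∀ n : {n : ℤ // k < |αn n|},
      (1 / Real.sqrt ((αn n)^2 - k^2)) * Real.exp (-Real.sqrt ((αn n)^2 - k^2) * a)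
        ≤ ((αn n)^2 - k^2)⁻¹ / a := by
    intro n
    set s := Real.sqrt ((αn n)^2 - k^2) with hs
    have hspos : 0 < s := Real.sqrt_pos.mpr (hpos n)
    have hssq : s^2 = (αn n)^2 - k^2 := Real.sq_sqrt (hpos n).le
    have hexp : Real.exp (-s * a) ≤ 1 / (s * a) := by
      rw [neg_mul, Real.exp_neg, one_div]
      exact inv_anti₀ (by positivity) (by linarith [Real.add_one_le_exp (s * a)])
    calc (1/s) * Real.exp (-s * a) ≤ (1/s) * (1/(s*a)) := by
          apply mul_le_mul_of_nonneg_left hexp (by positivity)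
      _ = ((αn n)^2 - k^2)⁻¹ / a := by
          rw [← hssq]; field_simp
  have hFnonneg : ∀ n : {n : ℤ // k < |αn n|},
      0 ≤ (1 / Real.sqrt ((αn n)^2 - k^2)) * Real.exp (-Real.sqrt ((αn n)^2 - k^2) * a) := by
    intro n; positivity
  have hFsum : Summable (fun n : {n : ℤ // k < |αn n|} =>
      (1 / Real.sqrt ((αn n)^2 - k^2)) * Real.exp (-Real.sqrt ((αn n)^2 - k^2) * a)) :=
    Summable.of_nonneg_of_le hFnonneg hFle (hgsub.div_const a)
  have htsum_le : (∑' n : {n : ℤ // k < |αn n|},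
      (1 / Real.sqrt ((αn n)^2 - k^2)) * Real.exp (-Real.sqrt ((αn n)^2 - k^2) * a))
        ≤ S / a := by
    calc (∑' n : {n : ℤ // k < |αn n|},
        (1 / Real.sqrt ((αn n)^2 - k^2)) * Real.exp (-Real.sqrt ((αn n)^2 - k^2) * a))
        ≤ ∑' n : {n : ℤ // k < |αn n|}, ((αn n)^2 - k^2)⁻¹ / a :=
          Summable.tsum_le_tsum hFle hFsum (hgsub.div_const a)
      _ = S / a := by rw [tsum_div_const]
  have habs : |∑' n : {n : ℤ // k < |αn n|},
      (1 / Real.sqrt ((αn n)^2 - k^2)) * Real.exp (-Real.sqrt ((αn n)^2 - k^2) * a)|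
      = ∑' n : {n : ℤ // k < |αn n|},
      (1 / Real.sqrt ((αn n)^2 - k^2)) * Real.exp (-Real.sqrt ((αn n)^2 - k^2) * a) :=
    abs_of_nonneg (tsum_nonneg hFnonneg)
  rw [habs]
  have hE : 0 ≤ Real.exp (-βΔ * a) / βΔ := by positivity
  have hfin : S / a ≤ (S * k + 1) * (1 / (k * a)) := by
    rw [div_le_iff₀ hapos]
    have hka : 0 < k * a := by positivity
    rw [mul_one_div, div_mul_eq_mul_div, le_div_iff₀ hka]
    nlinarith
  calc (∑' n : {n : ℤ // k < |αn n|},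
      (1 / Real.sqrt ((αn n)^2 - k^2)) * Real.exp (-Real.sqrt ((αn n)^2 - k^2) * a))
      ≤ S / a := htsum_le
    _ ≤ (S * k + 1) * (1 / (k * a)) := hfin
    _ ≤ (S * k + 1) * (Real.exp (-βΔ * a) / βΔ + 1 / (k * a)) := by
        apply mul_le_mul_of_nonneg_left _ (by positivity)
        linarith
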